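/- Let h̃_1, …, h̃_n be frequency histograms with d bins and weights π_j > 0 summing to 1. Let ã^i = Σ_j π_j h̃_j^i be the normalized arithmetic mean and g̃^i = Π_j (h̃_j^i)^{π_j} / Σ_{k=1}^d Π_j (h̃_j^k)^{π_j} the normalized geometric mean. Then for any two frequency histograms x and y with d bins, Σ_j π_j J(h̃_j, x) − Σ_j π_j J(h̃_j, y) = ( KL(ã : x) + KL(x : g̃) ) − ( KL(ã : y) + KL(y : g̃) ); in particular, minimizing Σ_j π_j J(h̃_j, ·) over the frequency histograms is equivalent to minimizing KL(ã : ·) + KL(· : g̃). -/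

import Mathlib

open scoped BigOperators

/-- Jeffreys divergence between positive histograms with `d` bins. -/
noncomputable def Jeffreys {d : ℕ} (p q : Fin d → ℝ) : ℝ :=
  ∑ i, (p i - q i) * Real.log (p i / q i)

/-- Kullback-Leibler divergence between positive histograms with `d` bins. -/
noncomputable def KL {d : ℕ} (p q : Fin d → ℝ) : ℝ :=
  ∑ i, p i * Real.log (p i / q i)

/-- the weighted Jeffreys objective over frequency histograms differs
from `KL(ã : ·) + KL(· : g̃)` by a constant, where `ã` and `g̃` are the normalized
weighted arithmetic and geometric means. -/
theorem jeffreys_frequency_equivalent_objective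
    (d n : ℕ) (h : Fin n → Fin d → ℝ) (π : Fin n → ℝ)
    (hpos : ∀ j i, 0 < h j i) (hfreq : ∀ j, ∑ i, h j i = 1)
    (hπ : ∀ j, 0 < π j) (hπ1 : ∑ j, π j = 1)
    (x y : Fin d → ℝ)
    (hx : ∀ i, 0 < x i) (hx1 : ∑ i, x i = 1)
    (hy : ∀ i, 0 < y i) (hy1 : ∑ i, y i = 1) :
    (∑ j, π j * Jeffreys (h j) x) - (∑ j, π j * Jeffreys (h j) y) =
      (KL (fun i => ∑ j, π j * h j i) x +
        KL x (fun i => (∏ j, h j i ^ π j) / ∑ k, ∏ j, h j k ^ π j)) -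
      (KL (fun i => ∑ j, π j * h j i) y +
        KL y (fun i => (∏ j, h j i ^ π j) / ∑ k, ∏ j, h j k ^ π j)) := by
  have hne : Nonempty (Fin n) := by
    rcases Nat.eq_zero_or_pos n with h0 | h0
    · subst h0; simp at hπ1
    · exact ⟨⟨0, h0⟩⟩
  have hned : Nonempty (Fin d) := by
    rcases Nat.eq_zero_or_pos d with h0 | h0
    · subst h0; simp at hx1
    · exact ⟨⟨0, h0⟩⟩
  have hprodpos : ∀ i, 0 < ∏ j, h j i ^ π j := fun i =>
    Finset.prod_pos fun j _ => Real.rpow_pos_of_pos (hpos j i) _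
  have hZ : 0 < ∑ k, ∏ j, h j k ^ π j :=
    Finset.sum_pos (fun k _ => hprodpos k) Finset.univ_nonempty
  have hapos : ∀ i, 0 < ∑ j, π j * h j i := fun i =>
    Finset.sum_pos (fun j _ => mul_pos (hπ j) (hpos j i)) Finset.univ_nonempty
  -- key: for any frequency histogram z, F(z) - G(z) = C
  have key : ∀ z : Fin d → ℝ, (∀ i, 0 < z i) → (∑ i, z i = 1) →
      (∑ j, π j * Jeffreys (h j) z) -
        (KL (fun i => ∑ j, π j * h j i) z +
          KL z (fun i => (∏ j, h j i ^ π j) / ∑ k, ∏ j, h j k ^ π j)) =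
      (∑ i, ∑ j, π j * (h j i * Real.log (h j i))) -
        (∑ i, (∑ j, π j * h j i) * Real.log (∑ j, π j * h j i)) -
        Real.log (∑ k, ∏ j, h j k ^ π j) := by
    intro z hz hz1
    have hF : (∑ j, π j * Jeffreys (h j) z) =
        (∑ i, ∑ j, π j * (h j i * Real.log (h j i)))
        - (∑ i, (∑ j, π j * h j i) * Real.log (z i))
        - (∑ i, z i * (∑ j, π j * Real.log (h j i)))
        + (∑ i, z i * Real.log (z i)) := by
      have step1 : (∑ j, π j * Jeffreys (h j) z) =
          ∑ i, ∑ j, π j * ((h j i - z i) * Real.log (h j i / z i)) := by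
        simp only [Jeffreys, Finset.mul_sum]
        exact Finset.sum_comm
      have step2 : ∀ i, ∑ j, π j * ((h j i - z i) * Real.log (h j i / z i)) =
          (∑ j, π j * (h j i * Real.log (h j i)))
          - (∑ j, π j * h j i) * Real.log (z i)
          - z i * (∑ j, π j * Real.log (h j i)) + z i * Real.log (z i) := by
        intro i
        have h4 : z i * Real.log (z i) = ∑ j, π j * (z i * Real.log (z i)) := by
          rw [← Finset.sum_mul, hπ1, one_mul]
        rw [h4, Finset.sum_mul, Finset.mul_sum, ← Finset.sum_sub_distrib,
          ← Finset.sum_sub_distrib, ← Finset.sum_add_distrib]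
        refine Finset.sum_congr rfl fun j _ => ?_
        rw [Real.log_div (hpos j i).ne' (hz i).ne']
        ring
      rw [step1, Finset.sum_congr rfl fun i _ => step2 i, Finset.sum_add_distrib,
        Finset.sum_sub_distrib, Finset.sum_sub_distrib]
    have hKL1 : KL (fun i => ∑ j, π j * h j i) z =
        (∑ i, (∑ j, π j * h j i) * Real.log (∑ j, π j * h j i))
        - (∑ i, (∑ j, π j * h j i) * Real.log (z i)) := by
      simp only [KL]
      rw [← Finset.sum_sub_distrib]
      refine Finset.sum_congr rfl fun i _ => ?_
      rw [Real.log_div (hapos i).ne' (hz i).ne']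
      ring
    have hKL2 : KL z (fun i => (∏ j, h j i ^ π j) / ∑ k, ∏ j, h j k ^ π j) =
        (∑ i, z i * Real.log (z i))
        - (∑ i, z i * (∑ j, π j * Real.log (h j i)))
        + Real.log (∑ k, ∏ j, h j k ^ π j) := by
      simp only [KL]
      have : ∀ i, Real.log (z i / ((∏ j, h j i ^ π j) / ∑ k, ∏ j, h j k ^ π j)) =
          Real.log (z i) - (∑ j, π j * Real.log (h j i))
            + Real.log (∑ k, ∏ j, h j k ^ π j) := by
        intro i
        rw [Real.log_div (hz i).ne' (div_pos (hprodpos i) hZ).ne',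
          Real.log_div (hprodpos i).ne' hZ.ne',
          Real.log_prod (fun j _ => (Real.rpow_pos_of_pos (hpos j i) _).ne')]
        have : ∀ j, Real.log (h j i ^ π j) = π j * Real.log (h j i) := fun j =>
          Real.log_rpow (hpos j i) _
        simp only [this]
        ring
      simp only [this, mul_add, mul_sub]
      rw [Finset.sum_add_distrib, Finset.sum_sub_distrib, ← Finset.sum_mul, hz1]
      ring
    rw [hF, hKL1, hKL2]
    ring
  have kx := key x hx hx1
  have ky := key y hy hy1
  linarith
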